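/- Let b, c, m : ℝ → ℝ be smooth, let Q : ℝ³ → ℝ be smooth, Q = Q(t,x,y), and let T, X : ℝ⁵ → ℝ be smooth, written T = T(t,x,y,p,σ), X = X(t,x,y,p,σ). Suppose that for every smooth function u : ℝ² → ℝ the identity Q(t,x,u)·F[u] = ∂ₜ[ T(t,x,u,∂ₜu,∂ₓu) ] + ∂ₓ[ X(t,x,u,∂ₜu,∂ₓu) ] holds on ℝ². Then ∂Q/∂y ≡ 0, and Q satisfies Q_tt − Q_xx − b(y)·Q_t − c(y)·Q_x + m′(y)·Q = 0 for all (t,x,y) ∈ ℝ³. (Every lowest-order conservation law multiplier of the semilinear wave equation is independent of u and is an adjoint-symmetry; the first condition is the Helmholtz-type condition on multipliers.) -/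

import Mathlib

noncomputable section

open Real

/-- Partial derivative in the first (time) variable. -/
def Dt (u : ℝ → ℝ → ℝ) : ℝ → ℝ → ℝ := fun t x => deriv (fun s => u s x) t

/-- Partial derivative in the second (space) variable. -/
def Dx (u : ℝ → ℝ → ℝ) : ℝ → ℝ → ℝ := fun t x => deriv (fun s => u t s) x

/-- Smoothness (C^∞) of a function of two real variables. -/
def Smooth2 (u : ℝ → ℝ → ℝ) : Prop := ContDiff ℝ (⊤ : ℕ∞) (fun p : ℝ × ℝ => u p.1 p.2)
/-- Partial derivative of Q(t,x,y) in its first argument. -/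
def D1 (Q : ℝ → ℝ → ℝ → ℝ) : ℝ → ℝ → ℝ → ℝ := fun t x y => deriv (fun s => Q s x y) t

/-- Partial derivative of Q(t,x,y) in its second argument. -/
def D2 (Q : ℝ → ℝ → ℝ → ℝ) : ℝ → ℝ → ℝ → ℝ := fun t x y => deriv (fun s => Q t s y) x

/-- Partial derivative of Q(t,x,y) in its third argument. -/
def D3 (Q : ℝ → ℝ → ℝ → ℝ) : ℝ → ℝ → ℝ → ℝ := fun t x y => deriv (fun s => Q t x s) y

/-- Smoothness (C^∞) of a function of three real variables. -/
def Smooth3 (Q : ℝ → ℝ → ℝ → ℝ) : Prop :=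
  ContDiff ℝ (⊤ : ℕ∞) (fun p : ℝ × ℝ × ℝ => Q p.1 p.2.1 p.2.2)
/-- The semilinear wave operator F[u] = ∂ₜ²u − ∂ₓ²u + b(u)∂ₜu + c(u)∂ₓu + m(u). -/
def Fop (b c m : ℝ → ℝ) (u : ℝ → ℝ → ℝ) : ℝ → ℝ → ℝ := fun t x =>
  Dt (Dt u) t x - Dx (Dx u) t x + b (u t x) * Dt u t x + c (u t x) * Dx u t x + m (u t x)

/-- The adjoint linearized operator along u:
L*[u]q = ∂ₜ²q − ∂ₓ²q − b(u)∂ₜq − c(u)∂ₓq + m′(u)q. -/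
def Lstar (b c m : ℝ → ℝ) (u q : ℝ → ℝ → ℝ) : ℝ → ℝ → ℝ := fun t x =>
  Dt (Dt q) t x - Dx (Dx q) t x - b (u t x) * Dt q t x - c (u t x) * Dx q t x
    + deriv m (u t x) * q t x

/-- Smoothness (C^∞) of a function of five real variables. -/
def Smooth5 (T : ℝ → ℝ → ℝ → ℝ → ℝ → ℝ) : Prop :=
  ContDiff ℝ (⊤ : ℕ∞) (fun p : ℝ × ℝ × ℝ × ℝ × ℝ => T p.1 p.2.1 p.2.2.1 p.2.2.2.1 p.2.2.2.2)

namespace S17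
abbrev E3 : Type := ℝ × ℝ × ℝ
abbrev E5 : Type := ℝ × ℝ × ℝ × ℝ × ℝ

variable {E : Type*} [NormedAddCommGroup E] [NormedSpace ℝ E]

def pd (F : E → ℝ) (v : E) : E → ℝ := fun q => fderiv ℝ F q v

theorem diffAt {F : E → ℝ} (hF : ContDiff ℝ (⊤ : ℕ∞) F) (q : E) :
    DifferentiableAt ℝ F q := (hF.differentiable (by simp)) q

theorem pd_contDiff {F : E → ℝ} (hF : ContDiff ℝ (⊤ : ℕ∞) F) (v : E) :
    ContDiff ℝ (⊤ : ℕ∞) (pd F v) := by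
  have h1 : ContDiff ℝ (⊤ : ℕ∞) (fderiv ℝ F) := hF.fderiv_right (m := (⊤ : ℕ∞)) (by simp)
  exact h1.clm_apply contDiff_const

theorem pd_comm {F : E → ℝ} (hF : ContDiff ℝ (⊤ : ℕ∞) F) (v w : E) (q : E) :
    pd (pd F v) w q = pd (pd F w) v q := by
  have hd : DifferentiableAt ℝ (fderiv ℝ F) q :=
    ((hF.fderiv_right (m := (⊤ : ℕ∞)) (by simp)).differentiable (by simp)) q
  have hsymm : ∀ v w, fderiv ℝ (fderiv ℝ F) q v w = fderiv ℝ (fderiv ℝ F) q w v := fun v w =>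
    second_derivative_symmetric (fun y => (diffAt hF y).hasFDerivAt) hd.hasFDerivAt v w
  unfold pd
  rw [fderiv_clm_apply hd (differentiableAt_const v), fderiv_clm_apply hd (differentiableAt_const w)]
  simp [hsymm v w]

theorem pd_neg {G : E → ℝ} (v : E) (q : E) : pd (fun x => -(G x)) v q = -(pd G v q) := by
  simp [pd, fderiv_neg]

theorem pd_const (c : ℝ) (v : E) (q : E) : pd (fun _ => c) v q = 0 := by
  simp [pd]

def a1 : E3 := (1,0,0)
def a2 : E3 := (0,1,0)
def a3 : E3 := (0,0,1)
def b1 : E5 := (1,0,0,0,0)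
def b2 : E5 := (0,1,0,0,0)
def b3 : E5 := (0,0,1,0,0)
def b4 : E5 := (0,0,0,1,0)
def b5 : E5 := (0,0,0,0,1)

theorem sec3_1 {F : E3 → ℝ} (hF : ContDiff ℝ (⊤ : ℕ∞) F) (t x y : ℝ) :
    HasDerivAt (fun s => F (s, x, y)) (pd F a1 (t, x, y)) t := by
  have hγ : HasDerivAt (fun s : ℝ => ((s, x, y) : E3)) a1 t :=
    (hasDerivAt_id t).prodMk ((hasDerivAt_const t x).prodMk (hasDerivAt_const t y))
  refine HasFDerivAt.comp_hasDerivAt _ ?_ hγ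
  exact (diffAt hF ((t,x,y) : E3)).hasFDerivAt

theorem sec3_2 {F : E3 → ℝ} (hF : ContDiff ℝ (⊤ : ℕ∞) F) (t x y : ℝ) :
    HasDerivAt (fun s => F (t, s, y)) (pd F a2 (t, x, y)) x := by
  have hγ : HasDerivAt (fun s : ℝ => ((t, s, y) : E3)) a2 x :=
    (hasDerivAt_const x t).prodMk ((hasDerivAt_id x).prodMk (hasDerivAt_const x y))
  refine HasFDerivAt.comp_hasDerivAt _ ?_ hγ
  exact (diffAt hF ((t,x,y) : E3)).hasFDerivAt

theorem sec3_3 {F : E3 → ℝ} (hF : ContDiff ℝ (⊤ : ℕ∞) F) (t x y : ℝ) :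
    HasDerivAt (fun s => F (t, x, s)) (pd F a3 (t, x, y)) y := by
  have hγ : HasDerivAt (fun s : ℝ => ((t, x, s) : E3)) a3 y :=
    (hasDerivAt_const y t).prodMk ((hasDerivAt_const y x).prodMk (hasDerivAt_id y))
  refine HasFDerivAt.comp_hasDerivAt _ ?_ hγ
  exact (diffAt hF ((t,x,y) : E3)).hasFDerivAt

theorem sec5_1 {F : E5 → ℝ} (hF : ContDiff ℝ (⊤ : ℕ∞) F) (t x y p σ : ℝ) :
    HasDerivAt (fun s => F (s, x, y, p, σ)) (pd F b1 (t, x, y, p, σ)) t := by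
  have hγ : HasDerivAt (fun s : ℝ => ((s, x, y, p, σ) : E5)) b1 t :=
    (hasDerivAt_id t).prodMk ((hasDerivAt_const t x).prodMk ((hasDerivAt_const t y).prodMk
      ((hasDerivAt_const t p).prodMk (hasDerivAt_const t σ))))
  refine HasFDerivAt.comp_hasDerivAt _ ?_ hγ
  exact (diffAt hF ((t,x,y,p,σ) : E5)).hasFDerivAt

theorem sec5_2 {F : E5 → ℝ} (hF : ContDiff ℝ (⊤ : ℕ∞) F) (t x y p σ : ℝ) :
    HasDerivAt (fun s => F (t, s, y, p, σ)) (pd F b2 (t, x, y, p, σ)) x := by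
  have hγ : HasDerivAt (fun s : ℝ => ((t, s, y, p, σ) : E5)) b2 x :=
    (hasDerivAt_const x t).prodMk ((hasDerivAt_id x).prodMk ((hasDerivAt_const x y).prodMk
      ((hasDerivAt_const x p).prodMk (hasDerivAt_const x σ))))
  refine HasFDerivAt.comp_hasDerivAt _ ?_ hγ
  exact (diffAt hF ((t,x,y,p,σ) : E5)).hasFDerivAt

theorem sec5_3 {F : E5 → ℝ} (hF : ContDiff ℝ (⊤ : ℕ∞) F) (t x y p σ : ℝ) :
    HasDerivAt (fun s => F (t, x, s, p, σ)) (pd F b3 (t, x, y, p, σ)) y := by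
  have hγ : HasDerivAt (fun s : ℝ => ((t, x, s, p, σ) : E5)) b3 y :=
    (hasDerivAt_const y t).prodMk ((hasDerivAt_const y x).prodMk ((hasDerivAt_id y).prodMk
      ((hasDerivAt_const y p).prodMk (hasDerivAt_const y σ))))
  refine HasFDerivAt.comp_hasDerivAt _ ?_ hγ
  exact (diffAt hF ((t,x,y,p,σ) : E5)).hasFDerivAt

theorem sec5_4 {F : E5 → ℝ} (hF : ContDiff ℝ (⊤ : ℕ∞) F) (t x y p σ : ℝ) :
    HasDerivAt (fun s => F (t, x, y, s, σ)) (pd F b4 (t, x, y, p, σ)) p := by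
  have hγ : HasDerivAt (fun s : ℝ => ((t, x, y, s, σ) : E5)) b4 p :=
    (hasDerivAt_const p t).prodMk ((hasDerivAt_const p x).prodMk ((hasDerivAt_const p y).prodMk
      ((hasDerivAt_id p).prodMk (hasDerivAt_const p σ))))
  refine HasFDerivAt.comp_hasDerivAt _ ?_ hγ
  exact (diffAt hF ((t,x,y,p,σ) : E5)).hasFDerivAt

theorem sec5_5 {F : E5 → ℝ} (hF : ContDiff ℝ (⊤ : ℕ∞) F) (t x y p σ : ℝ) :
    HasDerivAt (fun s => F (t, x, y, p, s)) (pd F b5 (t, x, y, p, σ)) σ := by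
  have hγ : HasDerivAt (fun s : ℝ => ((t, x, y, p, s) : E5)) b5 σ :=
    (hasDerivAt_const σ t).prodMk ((hasDerivAt_const σ x).prodMk ((hasDerivAt_const σ y).prodMk
      ((hasDerivAt_const σ p).prodMk (hasDerivAt_id σ))))
  refine HasFDerivAt.comp_hasDerivAt _ ?_ hγ
  exact (diffAt hF ((t,x,y,p,σ) : E5)).hasFDerivAt

theorem fderiv5_apply {F : E5 → ℝ} (ξ : E5) (v : E5) :
    fderiv ℝ F ξ v = v.1 * pd F b1 ξ + v.2.1 * pd F b2 ξ + v.2.2.1 * pd F b3 ξ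
      + v.2.2.2.1 * pd F b4 ξ + v.2.2.2.2 * pd F b5 ξ := by
  have hv : v = v.1 • b1 + v.2.1 • b2 + v.2.2.1 • b3 + v.2.2.2.1 • b4 + v.2.2.2.2 • b5 := by
    simp [b1, b2, b3, b4, b5, Prod.ext_iff]
  conv_lhs => rw [hv]
  simp [pd, smul_eq_mul]

theorem hasDerivAt_quad_form {f : ℝ → ℝ} (K0 K1 K2 t₀ : ℝ)
    (hf : ∀ a, f a = K0 + K1*(a - t₀) + K2*(a - t₀)^2/2) {d s : ℝ}
    (hd : d = K1 + K2*(s - t₀)) : HasDerivAt f d s := by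
  have h1 : HasDerivAt (fun a : ℝ => a - t₀) 1 s := (hasDerivAt_id s).sub_const t₀
  have h := ((h1.const_mul K1).const_add K0).add (((h1.pow 2).const_mul K2).div_const 2)
  have hfe : f = fun a => K0 + K1*(a - t₀) + K2*(a - t₀)^2/2 := funext hf
  rw [hfe, hd]
  refine h.congr_deriv ?_
  ring

end S17

namespace S17
theorem deriv_eq_of_eq {f g : ℝ → ℝ} {d e : ℝ} {s : ℝ} (hf : HasDerivAt f d s)
    (hg : HasDerivAt g e s) (h : ∀ a, f a = g a) : d = e := by
  rw [funext h] at hf; exact hf.unique hg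
end S17

namespace S17

theorem jet
    (b c m : ℝ → ℝ)
    (Q : ℝ → ℝ → ℝ → ℝ)
    (T X : ℝ → ℝ → ℝ → ℝ → ℝ → ℝ)
    (hT : Smooth5 T) (hX : Smooth5 X)
    (hdiv : ∀ u : ℝ → ℝ → ℝ, Smooth2 u →
      ∀ t x : ℝ,
        Q t x (u t x) * Fop b c m u t x =
          Dt (fun t x => T t x (u t x) (Dt u t x) (Dx u t x)) t x
          + Dx (fun t x => X t x (u t x) (Dt u t x) (Dx u t x)) t x) :
    ∀ t x y p σ r s w : ℝ,
      Q t x y * (r - w + b y * p + c y * σ + m y)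
        = pd (fun q : E5 => T q.1 q.2.1 q.2.2.1 q.2.2.2.1 q.2.2.2.2) b1 (t,x,y,p,σ)
          + p * pd (fun q : E5 => T q.1 q.2.1 q.2.2.1 q.2.2.2.1 q.2.2.2.2) b3 (t,x,y,p,σ)
          + r * pd (fun q : E5 => T q.1 q.2.1 q.2.2.1 q.2.2.2.1 q.2.2.2.2) b4 (t,x,y,p,σ)
          + s * pd (fun q : E5 => T q.1 q.2.1 q.2.2.1 q.2.2.2.1 q.2.2.2.2) b5 (t,x,y,p,σ)
          + pd (fun q : E5 => X q.1 q.2.1 q.2.2.1 q.2.2.2.1 q.2.2.2.2) b2 (t,x,y,p,σ)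
          + σ * pd (fun q : E5 => X q.1 q.2.1 q.2.2.1 q.2.2.2.1 q.2.2.2.2) b3 (t,x,y,p,σ)
          + s * pd (fun q : E5 => X q.1 q.2.1 q.2.2.1 q.2.2.2.1 q.2.2.2.2) b4 (t,x,y,p,σ)
          + w * pd (fun q : E5 => X q.1 q.2.1 q.2.2.1 q.2.2.2.1 q.2.2.2.2) b5 (t,x,y,p,σ) := by
  intro t x y p σ r s w
  set TU : E5 → ℝ := fun q => T q.1 q.2.1 q.2.2.1 q.2.2.2.1 q.2.2.2.2 with hTU
  set XU : E5 → ℝ := fun q => X q.1 q.2.1 q.2.2.1 q.2.2.2.1 q.2.2.2.2 with hXU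
  set u : ℝ → ℝ → ℝ := fun a z =>
    y + p*(a-t) + σ*(z-x) + r*(a-t)^2/2 + s*(a-t)*(z-x) + w*(z-x)^2/2 with hu
  have hsu : Smooth2 u := by
    unfold Smooth2; rw [hu]; simp only [div_eq_mul_inv]; fun_prop
  -- first partials
  have HDt : ∀ a z : ℝ, HasDerivAt (fun a' => u a' z) (p + s*(z-x) + r*(a-t)) a := by
    intro a z
    exact hasDerivAt_quad_form (y + σ*(z-x) + w*(z-x)^2/2) (p + s*(z-x)) r t
      (fun a' => by rw [hu]; ring) (by ring)
  have HDx : ∀ a z : ℝ, HasDerivAt (fun z' => u a z') (σ + s*(a-t) + w*(z-x)) z := by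
    intro a z
    exact hasDerivAt_quad_form (y + p*(a-t) + r*(a-t)^2/2) (σ + s*(a-t)) w x
      (fun z' => by rw [hu]; ring) (by ring)
  have huT : ∀ a z : ℝ, Dt u a z = p + s*(z-x) + r*(a-t) := fun a z => (HDt a z).deriv
  have huX : ∀ a z : ℝ, Dx u a z = σ + s*(a-t) + w*(z-x) := fun a z => (HDx a z).deriv
  have hu00 : u t x = y := by rw [hu]; ring
  have huT0 : Dt u t x = p := by rw [huT]; ring
  have huX0 : Dx u t x = σ := by rw [huX]; ring
  -- second partials at (t,x)
  have hutt : Dt (Dt u) t x = r := by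
    have : HasDerivAt (fun a => Dt u a x) r t :=
      hasDerivAt_quad_form (p + s*(x-x)) r 0 t (fun a => by rw [huT]; ring) (by ring)
    exact this.deriv
  have huxx : Dx (Dx u) t x = w := by
    have : HasDerivAt (fun z => Dx u t z) w x :=
      hasDerivAt_quad_form (σ + s*(t-t)) w 0 x (fun z => by rw [huX]; ring) (by ring)
    exact this.deriv
  -- LHS
  have hF : Fop b c m u t x = r - w + b y * p + c y * σ + m y := by
    show Dt (Dt u) t x - Dx (Dx u) t x + b (u t x) * Dt u t x + c (u t x) * Dx u t x + m (u t x)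
      = _
    rw [hutt, huxx, hu00, huT0, huX0]
  -- T-term
  have hTterm : Dt (fun t x => T t x (u t x) (Dt u t x) (Dx u t x)) t x
      = fderiv ℝ TU ((t,x,y,p,σ) : E5) ((1,0,p,r,s) : E5) := by
    have hγ : HasDerivAt (fun a : ℝ => ((a, x, u a x, Dt u a x, Dx u a x) : E5))
        ((1,0,p,r,s) : E5) t := by
      refine (hasDerivAt_id t).prodMk ((hasDerivAt_const t x).prodMk (HasDerivAt.prodMk ?_
        (HasDerivAt.prodMk ?_ ?_)))
      · have := HDt t x
        exact this.congr_deriv (by ring)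
      · exact hasDerivAt_quad_form (p + s*(x-x)) r 0 t (fun a => by rw [huT]; ring) (by ring)
      · exact hasDerivAt_quad_form (σ + w*(x-x)) s 0 t (fun a => by rw [huX]; ring)
          (by ring)
    have h := (HasFDerivAt.comp_hasDerivAt t
      ((diffAt hT ((t, x, u t x, Dt u t x, Dx u t x) : E5)).hasFDerivAt) hγ)
    have h2 := h.deriv
    rw [hu00, huT0, huX0] at h2
    exact h2
  -- X-term
  have hXterm : Dx (fun t x => X t x (u t x) (Dt u t x) (Dx u t x)) t x
      = fderiv ℝ XU ((t,x,y,p,σ) : E5) ((0,1,σ,s,w) : E5) := by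
    have hγ : HasDerivAt (fun z : ℝ => ((t, z, u t z, Dt u t z, Dx u t z) : E5))
        ((0,1,σ,s,w) : E5) x := by
      refine (hasDerivAt_const x t).prodMk ((hasDerivAt_id x).prodMk (HasDerivAt.prodMk ?_
        (HasDerivAt.prodMk ?_ ?_)))
      · have := HDx t x
        exact this.congr_deriv (by ring)
      · exact hasDerivAt_quad_form (p + r*(t-t)) s 0 x (fun z => by rw [huT]; ring) (by ring)
      · exact hasDerivAt_quad_form (σ + s*(t-t)) w 0 x (fun z => by rw [huX]; ring) (by ring)
    have h := (HasFDerivAt.comp_hasDerivAt x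
      ((diffAt hX ((t, x, u t x, Dt u t x, Dx u t x) : E5)).hasFDerivAt) hγ)
    have h2 := h.deriv
    rw [hu00, huT0, huX0] at h2
    exact h2
  have hmain := hdiv u hsu t x
  rw [hu00, hF, hTterm, hXterm, fderiv5_apply, fderiv5_apply] at hmain
  rw [hmain]
  ring
end S17

open S17

/-- Every lowest-order conservation law multiplier Q(t,x,u) of the semilinear
wave equation is independent of u (Helmholtz-type condition) and is an
adjoint-symmetry. -/
theorem stmt_17
    (b c m : ℝ → ℝ)
    (hb : ContDiff ℝ (⊤ : ℕ∞) b) (hc : ContDiff ℝ (⊤ : ℕ∞) c) (hm : ContDiff ℝ (⊤ : ℕ∞) m)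
    (Q : ℝ → ℝ → ℝ → ℝ) (hQ : Smooth3 Q)
    (T X : ℝ → ℝ → ℝ → ℝ → ℝ → ℝ) (hT : Smooth5 T) (hX : Smooth5 X)
    (hdiv : ∀ u : ℝ → ℝ → ℝ, Smooth2 u →
      ∀ t x : ℝ,
        Q t x (u t x) * Fop b c m u t x =
          Dt (fun t x => T t x (u t x) (Dt u t x) (Dx u t x)) t x
          + Dx (fun t x => X t x (u t x) (Dt u t x) (Dx u t x)) t x) :
    (∀ t x y : ℝ, D3 Q t x y = 0)
    ∧ (∀ t x y : ℝ,
        D1 (D1 Q) t x y - D2 (D2 Q) t x y - b y * D1 Q t x y - c y * D2 Q t x y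
          + deriv m y * Q t x y = 0) := by
  have J := S17.jet b c m Q T X hT hX hdiv
  set QU : E3 → ℝ := fun q => Q q.1 q.2.1 q.2.2 with hQUdef
  set TU : E5 → ℝ := fun q => T q.1 q.2.1 q.2.2.1 q.2.2.2.1 q.2.2.2.2 with hTUdef
  set XU : E5 → ℝ := fun q => X q.1 q.2.1 q.2.2.1 q.2.2.2.1 q.2.2.2.2 with hXUdef
  have hQU : ContDiff ℝ (⊤ : ℕ∞) QU := hQ
  have hTU : ContDiff ℝ (⊤ : ℕ∞) TU := hT
  have hXU : ContDiff ℝ (⊤ : ℕ∞) XU := hX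
  -- coefficient extraction
  have c4 : ∀ t x y p σ : ℝ, pd TU b4 (t,x,y,p,σ) = Q t x y := by
    intro t x y p σ
    have h1 := J t x y p σ 1 0 0
    have h0 := J t x y p σ 0 0 0
    nlinarith [h1, h0]
  have cw : ∀ t x y p σ : ℝ, pd XU b5 (t,x,y,p,σ) = -(Q t x y) := by
    intro t x y p σ
    have h1 := J t x y p σ 0 0 1
    have h0 := J t x y p σ 0 0 0
    nlinarith [h1, h0]
  have cs : ∀ t x y p σ : ℝ, pd TU b5 (t,x,y,p,σ) = -(pd XU b4 (t,x,y,p,σ)) := by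
    intro t x y p σ
    have h1 := J t x y p σ 0 1 0
    have h0 := J t x y p σ 0 0 0
    nlinarith [h1, h0]
  have cE : ∀ t x y p σ : ℝ,
      Q t x y * (b y * p + c y * σ + m y)
        = pd TU b1 (t,x,y,p,σ) + p * pd TU b3 (t,x,y,p,σ)
          + pd XU b2 (t,x,y,p,σ) + σ * pd XU b3 (t,x,y,p,σ) := by
    intro t x y p σ
    have h0 := J t x y p σ 0 0 0
    nlinarith [h0]
  -- function-level equalities
  have fT5 : pd TU b5 = fun q : E5 => -(pd XU b4 q) := by
    funext q; obtain ⟨t, x, y, p, σ⟩ := q; exact cs t x y p σ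
  -- smoothness shorthands
  have hT1 := pd_contDiff hTU b1
  have hT3 := pd_contDiff hTU b3
  have hX2 := pd_contDiff hXU b2
  have hX3 := pd_contDiff hXU b3
  have hX4 := pd_contDiff hXU b4
  have hX5 := pd_contDiff hXU b5
  have hA := pd_contDiff hX4 b1   -- A = ∂₁∂₄X
  have hB := pd_contDiff hX4 b3   -- B = ∂₃∂₄X
  -- ∂₄X₅ = 0, hence ∂₅X₄ = 0
  have d45X : ∀ t x y p σ : ℝ, pd (pd XU b5) b4 (t,x,y,p,σ) = 0 := by
    intro t x y p σ
    exact deriv_eq_of_eq (sec5_4 hX5 t x y p σ) (hasDerivAt_const p (-(Q t x y)))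
      (fun a => cw t x y a σ)
  have d54X : ∀ t x y p σ : ℝ, pd (pd XU b4) b5 (t,x,y,p,σ) = 0 := by
    intro t x y p σ
    rw [pd_comm hXU b4 b5 (t,x,y,p,σ)]
    exact d45X t x y p σ
  have f54X : pd (pd XU b4) b5 = fun _ : E5 => (0:ℝ) := by
    funext q; obtain ⟨t, x, y, p, σ⟩ := q; exact d54X t x y p σ
  -- ∂₅X₃ = -Q₃  and  ∂₅X₂ = -Q₂
  have e53X : ∀ t x y p σ : ℝ,
      pd (pd XU b3) b5 (t,x,y,p,σ) = -(pd QU a3 (t,x,y)) := by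
    intro t x y p σ
    rw [pd_comm hXU b3 b5 (t,x,y,p,σ)]
    exact deriv_eq_of_eq (sec5_3 hX5 t x y p σ) ((sec3_3 hQU t x y).neg)
      (fun a => cw t x a p σ)
  have e52X : ∀ t x y p σ : ℝ,
      pd (pd XU b2) b5 (t,x,y,p,σ) = -(pd QU a2 (t,x,y)) := by
    intro t x y p σ
    rw [pd_comm hXU b2 b5 (t,x,y,p,σ)]
    exact deriv_eq_of_eq (sec5_2 hX5 t x y p σ) ((sec3_2 hQU t x y).neg)
      (fun a => cw t a y p σ)
  -- ∂₄T₁ = Q₁ and ∂₄T₃ = Q₃ (with swap)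
  have e41T : ∀ t x y p σ : ℝ,
      pd (pd TU b1) b4 (t,x,y,p,σ) = pd QU a1 (t,x,y) := by
    intro t x y p σ
    rw [pd_comm hTU b1 b4 (t,x,y,p,σ)]
    exact deriv_eq_of_eq (sec5_1 (pd_contDiff hTU b4) t x y p σ) (sec3_1 hQU t x y)
      (fun a => c4 a x y p σ)
  have e43T : ∀ t x y p σ : ℝ,
      pd (pd TU b3) b4 (t,x,y,p,σ) = pd QU a3 (t,x,y) := by
    intro t x y p σ
    rw [pd_comm hTU b3 b4 (t,x,y,p,σ)]
    exact deriv_eq_of_eq (sec5_3 (pd_contDiff hTU b4) t x y p σ) (sec3_3 hQU t x y)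
      (fun a => c4 t x a p σ)
  -- Step S : ∂σ of cE  (already rewritten via swaps)
  have S0 : ∀ t x y p σ : ℝ,
      Q t x y * c y
        = -(pd (pd XU b4) b1 (t,x,y,p,σ)) - p * pd (pd XU b4) b3 (t,x,y,p,σ)
          - pd QU a2 (t,x,y) + pd XU b3 (t,x,y,p,σ) - σ * pd QU a3 (t,x,y) := by
    intro t x y p σ
    have hL : HasDerivAt (fun σ' => Q t x y * (b y * p + c y * σ' + m y))
        (Q t x y * (c y * 1)) σ :=
      ((((hasDerivAt_id σ).const_mul (c y)).const_add (b y * p)).add_const (m y)).const_mul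
        (Q t x y)
    have hR : HasDerivAt (fun σ' => pd TU b1 (t,x,y,p,σ') + p * pd TU b3 (t,x,y,p,σ')
          + pd XU b2 (t,x,y,p,σ') + σ' * pd XU b3 (t,x,y,p,σ'))
        (pd (pd TU b1) b5 (t,x,y,p,σ) + p * pd (pd TU b3) b5 (t,x,y,p,σ)
          + pd (pd XU b2) b5 (t,x,y,p,σ)
          + (1 * pd XU b3 (t,x,y,p,σ) + σ * pd (pd XU b3) b5 (t,x,y,p,σ))) σ :=
      (((sec5_5 hT1 t x y p σ).add ((sec5_5 hT3 t x y p σ).const_mul p)).add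
        (sec5_5 hX2 t x y p σ)).add ((hasDerivAt_id σ).mul (sec5_5 hX3 t x y p σ))
    have hS := deriv_eq_of_eq hL hR (fun a => cE t x y p a)
    have h15 : pd (pd TU b1) b5 (t,x,y,p,σ) = -(pd (pd XU b4) b1 (t,x,y,p,σ)) := by
      rw [pd_comm hTU b1 b5 (t,x,y,p,σ), fT5, pd_neg]
    have h35 : pd (pd TU b3) b5 (t,x,y,p,σ) = -(pd (pd XU b4) b3 (t,x,y,p,σ)) := by
      rw [pd_comm hTU b3 b5 (t,x,y,p,σ), fT5, pd_neg]
    rw [h15, h35, e52X, e53X] at hS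
    linarith [hS]
  -- Part 1 : ∂σ of S0 gives Q₃ = 0
  have hq3 : ∀ t x y : ℝ, pd QU a3 (t,x,y) = 0 := by
    intro t x y
    have hL : HasDerivAt (fun _ : ℝ => Q t x y * c y) 0 (0:ℝ) := hasDerivAt_const _ _
    have hR : HasDerivAt (fun σ' => -(pd (pd XU b4) b1 (t,x,y,0,σ'))
          - 0 * pd (pd XU b4) b3 (t,x,y,0,σ') - pd QU a2 (t,x,y)
          + pd XU b3 (t,x,y,0,σ') - σ' * pd QU a3 (t,x,y))
        (((-(pd (pd (pd XU b4) b1) b5 (t,x,y,0,0))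
          - 0 * pd (pd (pd XU b4) b3) b5 (t,x,y,0,0))
          + pd (pd XU b3) b5 (t,x,y,0,0)) - 1 * pd QU a3 (t,x,y)) (0:ℝ) :=
      ((((sec5_5 hA t x y 0 0).neg.sub ((sec5_5 hB t x y 0 0).const_mul 0)).sub_const
        (pd QU a2 (t,x,y))).add (sec5_5 hX3 t x y 0 0)).sub
        ((hasDerivAt_id (0:ℝ)).mul_const (pd QU a3 (t,x,y)))
    have hS := deriv_eq_of_eq hL hR (fun a => S0 t x y 0 a)
    have z1 : pd (pd (pd XU b4) b1) b5 (t,x,y,0,0) = 0 := by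
      rw [pd_comm hX4 b1 b5 (t,x,y,0,0), f54X, pd_const]
    have z2 : pd (pd (pd XU b4) b3) b5 (t,x,y,0,0) = 0 := by
      rw [pd_comm hX4 b3 b5 (t,x,y,0,0), f54X, pd_const]
    have z3 := e53X t x y 0 0
    rw [z1, z2, z3] at hS
    linarith [hS]
  -- Step P : ∂p of cE
  have P0 : ∀ t x y p σ : ℝ,
      Q t x y * b y
        = pd QU a1 (t,x,y) + pd TU b3 (t,x,y,p,σ) + pd (pd XU b2) b4 (t,x,y,p,σ)
          + σ * pd (pd XU b3) b4 (t,x,y,p,σ) := by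
    intro t x y p σ
    have hL : HasDerivAt (fun p' => Q t x y * (b y * p' + c y * σ + m y))
        (Q t x y * (b y * 1)) p :=
      ((((hasDerivAt_id p).const_mul (b y)).add_const (c y * σ)).add_const (m y)).const_mul
        (Q t x y)
    have hR : HasDerivAt (fun p' => pd TU b1 (t,x,y,p',σ) + p' * pd TU b3 (t,x,y,p',σ)
          + pd XU b2 (t,x,y,p',σ) + σ * pd XU b3 (t,x,y,p',σ))
        (pd (pd TU b1) b4 (t,x,y,p,σ)
          + (1 * pd TU b3 (t,x,y,p,σ) + p * pd (pd TU b3) b4 (t,x,y,p,σ))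
          + pd (pd XU b2) b4 (t,x,y,p,σ) + σ * pd (pd XU b3) b4 (t,x,y,p,σ)) p :=
      (((sec5_4 hT1 t x y p σ).add ((hasDerivAt_id p).mul (sec5_4 hT3 t x y p σ))).add
        (sec5_4 hX2 t x y p σ)).add ((sec5_4 hX3 t x y p σ).const_mul σ)
    have hS := deriv_eq_of_eq hL hR (fun a => cE t x y a σ)
    rw [e41T, e43T, hq3] at hS
    linarith [hS]
  have P00 : ∀ t x y p : ℝ,
      Q t x y * b y
        = pd QU a1 (t,x,y) + pd TU b3 (t,x,y,p,0) + pd (pd XU b2) b4 (t,x,y,p,0) := by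
    intro t x y p
    have := P0 t x y p 0
    linarith [this]
  -- ∂t of P00
  have Pt : ∀ t x y : ℝ,
      pd QU a1 (t,x,y) * b y
        = pd (pd QU a1) a1 (t,x,y) + pd (pd TU b3) b1 (t,x,y,0,0)
          + pd (pd (pd XU b2) b4) b1 (t,x,y,0,0) := by
    intro t x y
    have hL : HasDerivAt (fun t' => Q t' x y * b y) (pd QU a1 (t,x,y) * b y) t :=
      (sec3_1 hQU t x y).mul_const (b y)
    have hR : HasDerivAt (fun t' => pd QU a1 (t',x,y) + pd TU b3 (t',x,y,0,0)
          + pd (pd XU b2) b4 (t',x,y,0,0))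
        (pd (pd QU a1) a1 (t,x,y) + pd (pd TU b3) b1 (t,x,y,0,0)
          + pd (pd (pd XU b2) b4) b1 (t,x,y,0,0)) t :=
      ((sec3_1 (pd_contDiff hQU a1) t x y).add (sec5_1 hT3 t x y 0 0)).add
        (sec5_1 (pd_contDiff hX2 b4) t x y 0 0)
    exact deriv_eq_of_eq hL hR (fun a => P00 a x y 0)
  -- S0 at p = σ = 0
  have S0x0 : ∀ t x y : ℝ,
      Q t x y * c y
        = -(pd (pd XU b4) b1 (t,x,y,0,0)) - pd QU a2 (t,x,y) + pd XU b3 (t,x,y,0,0) := by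
    intro t x y
    have h := S0 t x y 0 0
    linarith [h]
  -- ∂x of S0x0
  have Sx : ∀ t x y : ℝ,
      pd QU a2 (t,x,y) * c y
        = (-(pd (pd (pd XU b4) b1) b2 (t,x,y,0,0)) - pd (pd QU a2) a2 (t,x,y))
          + pd (pd XU b3) b2 (t,x,y,0,0) := by
    intro t x y
    have hL : HasDerivAt (fun x' => Q t x' y * c y) (pd QU a2 (t,x,y) * c y) x :=
      (sec3_2 hQU t x y).mul_const (c y)
    have hR : HasDerivAt (fun x' => -(pd (pd XU b4) b1 (t,x',y,0,0)) - pd QU a2 (t,x',y)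
          + pd XU b3 (t,x',y,0,0))
        ((-(pd (pd (pd XU b4) b1) b2 (t,x,y,0,0)) - pd (pd QU a2) a2 (t,x,y))
          + pd (pd XU b3) b2 (t,x,y,0,0)) x :=
      ((sec5_2 hA t x y 0 0).neg.sub (sec3_2 (pd_contDiff hQU a2) t x y)).add
        (sec5_2 hX3 t x y 0 0)
    exact deriv_eq_of_eq hL hR (fun a => S0x0 t a y)
  -- cE at p = σ = 0
  have cE0 : ∀ t x y : ℝ,
      Q t x y * m y = pd TU b1 (t,x,y,0,0) + pd XU b2 (t,x,y,0,0) := by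
    intro t x y
    have h := cE t x y 0 0
    linarith [h]
  -- ∂y of cE0
  have Y : ∀ t x y : ℝ,
      pd QU a3 (t,x,y) * m y + Q t x y * deriv m y
        = pd (pd TU b1) b3 (t,x,y,0,0) + pd (pd XU b2) b3 (t,x,y,0,0) := by
    intro t x y
    have hmy : HasDerivAt m (deriv m y) y :=
      ((hm.differentiable (by simp)) y).hasDerivAt
    have hL : HasDerivAt (fun y' => Q t x y' * m y')
        (pd QU a3 (t,x,y) * m y + Q t x y * deriv m y) y :=
      (sec3_3 hQU t x y).mul hmy
    have hR : HasDerivAt (fun y' => pd TU b1 (t,x,y',0,0) + pd XU b2 (t,x,y',0,0))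
        (pd (pd TU b1) b3 (t,x,y,0,0) + pd (pd XU b2) b3 (t,x,y,0,0)) y :=
      (sec5_3 hT1 t x y 0 0).add (sec5_3 hX2 t x y 0 0)
    exact deriv_eq_of_eq hL hR (fun a => cE0 t x a)
  -- third-order mixed partial rearrangement
  have mix : ∀ t x y : ℝ,
      pd (pd (pd XU b2) b4) b1 (t,x,y,0,0) = pd (pd (pd XU b4) b1) b2 (t,x,y,0,0) := by
    intro t x y
    have h1 : pd (pd XU b2) b4 = pd (pd XU b4) b2 := by
      funext q; obtain ⟨t, x, y, p, σ⟩ := q; exact pd_comm hXU b2 b4 (t,x,y,p,σ)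
    rw [h1, pd_comm (pd_contDiff hXU b4) b2 b1 (t,x,y,0,0)]
  -- assemble part 2
  have part2 : ∀ t x y : ℝ,
      pd (pd QU a1) a1 (t,x,y) - pd (pd QU a2) a2 (t,x,y)
        - b y * pd QU a1 (t,x,y) - c y * pd QU a2 (t,x,y) + deriv m y * Q t x y = 0 := by
    intro t x y
    have hPt := Pt t x y
    have hSx := Sx t x y
    have hY := Y t x y
    rw [hq3 t x y] at hY
    have sw1 : pd (pd TU b1) b3 (t,x,y,0,0) = pd (pd TU b3) b1 (t,x,y,0,0) :=
      pd_comm hTU b1 b3 (t,x,y,0,0)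
    have sw2 : pd (pd XU b2) b3 (t,x,y,0,0) = pd (pd XU b3) b2 (t,x,y,0,0) :=
      pd_comm hXU b2 b3 (t,x,y,0,0)
    rw [sw1, sw2] at hY
    rw [mix t x y] at hPt
    linarith [hPt, hSx, hY]
  -- final conversion from pd to D
  have hD1 : ∀ t x y : ℝ, D1 Q t x y = pd QU a1 (t,x,y) := fun t x y =>
    (sec3_1 hQU t x y).deriv
  have hD2 : ∀ t x y : ℝ, D2 Q t x y = pd QU a2 (t,x,y) := fun t x y =>
    (sec3_2 hQU t x y).deriv
  have hD3 : ∀ t x y : ℝ, D3 Q t x y = pd QU a3 (t,x,y) := fun t x y =>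
    (sec3_3 hQU t x y).deriv
  constructor
  · intro t x y
    rw [hD3, hq3]
  · intro t x y
    have hD11 : D1 (D1 Q) t x y = pd (pd QU a1) a1 (t,x,y) := by
      show deriv (fun s => D1 Q s x y) t = _
      have hfe : (fun s => D1 Q s x y) = fun s => pd QU a1 (s,x,y) :=
        funext (fun s => hD1 s x y)
      rw [hfe]
      exact (sec3_1 (pd_contDiff hQU a1) t x y).deriv
    have hD22 : D2 (D2 Q) t x y = pd (pd QU a2) a2 (t,x,y) := by
      show deriv (fun s => D2 Q t s y) x = _
      have hfe : (fun s => D2 Q t s y) = fun s => pd QU a2 (t,s,y) :=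
        funext (fun s => hD2 t s y)
      rw [hfe]
      exact (sec3_2 (pd_contDiff hQU a2) t x y).deriv
    rw [hD11, hD22, hD1, hD2]
    exact part2 t x y
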